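/- cov(N) ≤ 𝔟_⋔ and 𝔟_⋔ ≤ non(M): on Cantor space, the covering number of the null ideal is at most 𝔟_⋔, which in turn is at most the uniformity of the meager ideal. -/

import Mathlib

open Cardinal Set Filter MeasureTheory

/-- The `n`-th block of the fixed interval partition of `ℕ` into consecutive finite
intervals with `|I_n| = 2^(n+1)`: `I n = [2^(n+1) - 2, 2^(n+2) - 2)`. -/
def Iblock (n : ℕ) : Finset ℕ := Finset.Ico (2 ^ (n + 1) - 2) (2 ^ (n + 2) - 2)

/-- `f ⋔ g`: `f ↾ I_k ≠ g ↾ I_k` for all but finitely many `k`. -/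
def Pitch (f g : ℕ → Bool) : Prop :=
  ∀ᶠ k in Filter.atTop, ∃ i ∈ Iblock k, f i ≠ g i

/-- `μ` is the uniform product probability measure on Cantor space `2^ω`
(each coordinate uniform on `{0,1}`), characterized by its values on cylinders. -/
def IsUniformProductMeasure (μ : Measure (ℕ → Bool)) : Prop :=
  IsProbabilityMeasure μ ∧
  ∀ s : Finset ℕ, ∀ g : ℕ → Bool,
    μ { f : ℕ → Bool | ∀ i ∈ s, f i = g i } = (1 / 2 : ENNReal) ^ s.card

/-- `𝔟_⋔`: the least cardinality of a family `F ⊆ 2^ω` such that for every `g ∈ 2^ω`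
some `f ∈ F` satisfies `¬(f ⋔ g)`. -/
noncomputable def bPitch : Cardinal :=
  sInf { c | ∃ F : Set (ℕ → Bool), (∀ g : ℕ → Bool, ∃ f ∈ F, ¬ Pitch f g) ∧ #F = c }

/-- `cov(N)` on Cantor space: the least cardinality of a family of `μ`-null subsets of
`2^ω` whose union covers `2^ω`. -/
noncomputable def covNullCantor (μ : Measure (ℕ → Bool)) : Cardinal :=
  sInf { c | ∃ F : Set (Set (ℕ → Bool)), (∀ s ∈ F, μ s = 0) ∧ ⋃₀ F = Set.univ ∧ #F = c }

/-- `non(M)` on Cantor space: the least cardinality of a non-meager subset of `2^ω`. -/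
noncomputable def nonMeagerCantor : Cardinal :=
  sInf { c | ∃ S : Set (ℕ → Bool), ¬ IsMeagre S ∧ #S = c }

lemma two_le_pow (k : ℕ) : 2 ≤ 2 ^ (k + 1) :=
  le_self_pow₀ (by norm_num) (Nat.succ_ne_zero k)

lemma Iblock_card (k : ℕ) : (Iblock k).card = 2 ^ (k + 1) := by
  have h1 := two_le_pow k
  have h2 : 2 ^ (k + 2) = 2 ^ (k + 1) * 2 := by ring
  simp only [Iblock, Nat.card_Ico]
  omega

lemma Iblock_nonempty (k : ℕ) : (Iblock k).Nonempty := by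
  rw [← Finset.card_pos, Iblock_card]; positivity

lemma le_Iblock_min (k : ℕ) {i : ℕ} (hi : i ∈ Iblock k) : k ≤ i := by
  have := Nat.lt_two_pow_self (n := k + 1)
  simp only [Iblock, Finset.mem_Ico] at hi
  omega

lemma not_pitch_self (g : ℕ → Bool) : ¬ Pitch g g := by
  intro h
  rcases (h.and (eventually_atTop.2 ⟨0, fun k _ => trivial⟩)).exists with ⟨k, ⟨i, _, hne⟩, _⟩
  exact hne rfl

/-- For fixed `f`, the set of `g` with `¬ Pitch f g` is null. -/
lemma null_not_pitch (μ : Measure (ℕ → Bool)) (hμ : IsUniformProductMeasure μ)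
    (f : ℕ → Bool) : μ { g | ¬ Pitch f g } = 0 := by
  set E : ℕ → Set (ℕ → Bool) := fun k => { g | ∀ i ∈ Iblock k, g i = f i } with hE
  have hμE : ∀ k, μ (E k) = (1 / 2 : ENNReal) ^ (2 ^ (k + 1)) := by
    intro k; rw [hμ.2 (Iblock k) f, Iblock_card]
  have hsum : (∑' k, μ (E k)) ≠ ⊤ := by
    have hle : ∀ k, μ (E k) ≤ (1 / 2 : ENNReal) ^ k := by
      intro k
      rw [hμE k]
      refine pow_le_pow_of_le_one zero_le (by norm_num) ?_
      have := Nat.lt_two_pow_self (n := k)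
      omega
    refine ne_top_of_le_ne_top ?_ (ENNReal.tsum_le_tsum hle)
    rw [ENNReal.tsum_geometric]
    simp [one_div, ENNReal.one_sub_inv_two]
  have hlim := measure_limsup_atTop_eq_zero (μ := μ) hsum
  refine measure_mono_null ?_ hlim
  intro g hg
  rw [mem_limsup_iff_frequently_mem]
  have : ∃ᶠ k in atTop, ¬ ∃ i ∈ Iblock k, f i ≠ g i := by
    rw [← Filter.not_eventually]; exact hg
  refine this.mono fun k hk => ?_
  push_neg at hk
  intro i hi
  exact ((hk i hi).symm)

/-- For fixed `g`, the set of `f` with `Pitch f g` is meagre. -/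
lemma meagre_pitch (g : ℕ → Bool) : IsMeagre { f | Pitch f g } := by
  set C : ℕ → Set (ℕ → Bool) :=
    fun n => { f | ∀ k, n ≤ k → ∃ i ∈ Iblock k, f i ≠ g i } with hCdef
  have hsub : { f | Pitch f g } ⊆ ⋃ n, C n := by
    intro f hf
    rcases eventually_atTop.1 hf with ⟨n, hn⟩
    exact mem_iUnion.2 ⟨n, fun k hk => hn k hk⟩
  refine IsMeagre.mono hsub (isMeagre_iUnion fun n => ?_)
  -- each C n is closed and nowhere dense
  have hclosed : IsClosed (C n) := by
    have hCeq : C n = ⋂ k, ⋂ (_ : n ≤ k), ⋃ i ∈ Iblock k, { f : ℕ → Bool | f i ≠ g i } := by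
      ext f; simp [hCdef]
    rw [hCeq]
    refine isClosed_iInter fun k => isClosed_iInter fun _ => ?_
    refine (Iblock k).finite_toSet.isClosed_biUnion fun i _ => ?_
    have : { f : ℕ → Bool | f i ≠ g i } = (fun f : ℕ → Bool => f i) ⁻¹' {g i}ᶜ := rfl
    rw [this]
    exact (isClosed_discrete _).preimage (continuous_apply i)
  have hdense : Dense (C n)ᶜ := by
    rw [dense_iff_inter_open]
    intro U hU ⟨f, hf⟩
    rcases isOpen_pi_iff.1 hU f hf with ⟨I, u, hu, hsub⟩
    set k : ℕ := max n (I.sup id + 1) with hk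
    set h : ℕ → Bool := fun i => if i ∈ Iblock k then g i else f i with hh
    refine ⟨h, hsub ?_, ?_⟩
    · intro i hi
      have hik : i ∉ Iblock k := by
        intro hik
        have h1 : k ≤ i := le_Iblock_min k hik
        have h2 : i ≤ I.sup id := Finset.le_sup (f := id) hi
        omega
      have : h i = f i := by simp [hh, hik]
      rw [this]
      exact (hu i hi).2
    · intro hC
      rcases hC k (le_max_left _ _) with ⟨i, hi, hne⟩
      exact hne (by simp [hh, hi])
  refine IsMeagre.mono (subset_refl (C n)) ?_
  rw [isMeagre_iff_countable_union_isNowhereDense]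
  refine ⟨{C n}, ?_, countable_singleton _, by simp⟩
  rintro t rfl
  rw [hclosed.isNowhereDense_iff, interior_eq_empty_iff_dense_compl]
  exact hdense

lemma not_meagre_univ : ¬ IsMeagre (Set.univ : Set (ℕ → Bool)) := by
  intro h
  rw [IsMeagre, compl_univ] at h
  have := (dense_of_mem_residual h).nonempty
  simp at this

/-- `cov(N) ≤ 𝔟_⋔ ≤ non(M)` on Cantor space. -/
theorem covNull_le_bPitch_le_nonMeager (μ : Measure (ℕ → Bool))
    (hμ : IsUniformProductMeasure μ) :
    covNullCantor μ ≤ bPitch ∧ bPitch ≤ nonMeagerCantor := by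
  constructor
  · -- cov(N) ≤ 𝔟_⋔
    refine le_csInf ⟨#(Set.univ : Set (ℕ → Bool)),
      Set.univ, fun g => ⟨g, trivial, not_pitch_self g⟩, rfl⟩ ?_
    rintro c ⟨F, hF, rfl⟩
    set G : Set (Set (ℕ → Bool)) := (fun f => { g | ¬ Pitch f g }) '' F with hG
    have h1 : covNullCantor μ ≤ #G := by
      refine csInf_le' ⟨G, ?_, ?_, rfl⟩
      · rintro s ⟨f, _, rfl⟩
        exact null_not_pitch μ hμ f
      · refine Set.eq_univ_of_forall fun g => ?_
        rcases hF g with ⟨f, hfF, hfg⟩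
        exact ⟨{ g | ¬ Pitch f g }, ⟨f, hfF, rfl⟩, hfg⟩
    exact h1.trans (Cardinal.mk_image_le)
  · -- 𝔟_⋔ ≤ non(M)
    refine le_csInf ⟨#(Set.univ : Set (ℕ → Bool)), Set.univ, not_meagre_univ, rfl⟩ ?_
    rintro c ⟨S, hS, rfl⟩
    refine csInf_le' ⟨S, fun g => ?_, rfl⟩
    by_contra hcon
    push_neg at hcon
    exact hS ((meagre_pitch g).mono fun f hf => hcon f hf)
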